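/- Let T be a bounded linear operator on a complex Hilbert space H and let n ≥ 2 be an integer. Then w(T)ⁿ ≤ (1/2^{n-1}) w(Tⁿ) + ∑_{k=1}^{n-1} (1/2^k) ‖Tᵏ‖ ‖T‖^{n-k}. -/

import Mathlib

open scoped InnerProductSpace

variable {H : Type*} [NormedAddCommGroup H] [InnerProductSpace ℂ H] [CompleteSpace H]

/-- Buzano's inequality. -/
lemma buzano (a b e : H) (he : ‖e‖ = 1) :
    ‖⟪a, e⟫_ℂ * ⟪e, b⟫_ℂ‖ ≤ (‖a‖ * ‖b‖ + ‖⟪a, b⟫_ℂ‖) / 2 := by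
  have hnr : ‖((2 * ⟪e, a⟫_ℂ) • e - a)‖ = ‖a‖ := by
    have h1 : ‖((2 * ⟪e, a⟫_ℂ) • e - a)‖ ^ 2 = ‖a‖ ^ 2 := by
      rw [@norm_sub_sq ℂ, inner_smul_left, norm_smul]
      simp only [he, mul_one, map_mul, Complex.conj_ofNat]
      rw [mul_assoc, RCLike.conj_mul]
      have h2c : ‖(2 * ⟪e, a⟫_ℂ)‖ = 2 * ‖⟪e, a⟫_ℂ‖ := by rw [norm_mul]; norm_num
      rw [h2c]
      simp [RCLike.mul_re, ← Complex.ofReal_pow]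
      ring
    nlinarith [norm_nonneg ((2 * ⟪e, a⟫_ℂ) • e - a), norm_nonneg a]
  have h2 : ⟪((2 * ⟪e, a⟫_ℂ) • e - a), b⟫_ℂ = 2 * (⟪a, e⟫_ℂ * ⟪e, b⟫_ℂ) - ⟪a, b⟫_ℂ := by
    rw [inner_sub_left, inner_smul_left, ← inner_conj_symm a e]
    simp only [map_mul, Complex.conj_ofNat, Complex.conj_conj]
    ring
  have h3 : ‖⟪((2 * ⟪e, a⟫_ℂ) • e - a), b⟫_ℂ‖ ≤ ‖a‖ * ‖b‖ := hnr ▸ norm_inner_le_norm _ b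
  have h4 : ‖(2:ℂ) * (⟪a, e⟫_ℂ * ⟪e, b⟫_ℂ)‖ ≤ ‖a‖ * ‖b‖ + ‖⟪a, b⟫_ℂ‖ := by
    calc ‖(2:ℂ) * (⟪a, e⟫_ℂ * ⟪e, b⟫_ℂ)‖
        = ‖⟪((2 * ⟪e, a⟫_ℂ) • e - a), b⟫_ℂ + ⟪a, b⟫_ℂ‖ := by rw [h2]; ring_nf
      _ ≤ ‖⟪((2 * ⟪e, a⟫_ℂ) • e - a), b⟫_ℂ‖ + ‖⟪a, b⟫_ℂ‖ := norm_add_le _ _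
      _ ≤ ‖a‖ * ‖b‖ + ‖⟪a, b⟫_ℂ‖ := by linarith
  have h5 : ‖(2:ℂ) * (⟪a, e⟫_ℂ * ⟪e, b⟫_ℂ)‖ = 2 * ‖⟪a, e⟫_ℂ * ⟪e, b⟫_ℂ‖ := by
    rw [norm_mul]; norm_num
  linarith [h5 ▸ h4]

/-- The numerical radius of a bounded linear operator. -/
noncomputable def numRadius (T : H →L[ℂ] H) : ℝ :=
  sSup {r : ℝ | ∃ x : H, ‖x‖ = 1 ∧ r = ‖⟪T x, x⟫_ℂ‖}

lemma numRadius_bddAbove (T : H →L[ℂ] H) :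
    ∀ r ∈ {r : ℝ | ∃ x : H, ‖x‖ = 1 ∧ r = ‖⟪T x, x⟫_ℂ‖}, r ≤ ‖T‖ := by
  rintro r ⟨x, hx, rfl⟩
  calc ‖⟪T x, x⟫_ℂ‖ ≤ ‖T x‖ * ‖x‖ := norm_inner_le_norm _ _
    _ ≤ ‖T‖ * ‖x‖ * ‖x‖ := by
        gcongr
        exact T.le_opNorm x
    _ = ‖T‖ := by rw [hx]; ring

lemma le_numRadius (T : H →L[ℂ] H) {x : H} (hx : ‖x‖ = 1) :
    ‖⟪T x, x⟫_ℂ‖ ≤ numRadius T :=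
  le_csSup ⟨‖T‖, numRadius_bddAbove T⟩ ⟨x, hx, rfl⟩

lemma numRadius_nonneg (T : H →L[ℂ] H) : 0 ≤ numRadius T :=
  Real.sSup_nonneg (by rintro r ⟨x, hx, rfl⟩; exact norm_nonneg _)

/-- The key "step" inequality, from Buzano's inequality with `b = T† x`. -/
lemma step (T : H →L[ℂ] H) (m : ℕ) {x : H} (hx : ‖x‖ = 1) :
    ‖⟪(T ^ m) x, x⟫_ℂ‖ * ‖⟪T x, x⟫_ℂ‖ ≤
      (‖T ^ m‖ * ‖T‖ + ‖⟪(T ^ (m + 1)) x, x⟫_ℂ‖) / 2 := by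
  have hb := buzano ((T ^ m) x) (ContinuousLinearMap.adjoint T x) x hx
  rw [ContinuousLinearMap.adjoint_inner_right] at hb
  have hib : ⟪(T ^ m) x, ContinuousLinearMap.adjoint T x⟫_ℂ = ⟪(T ^ (m + 1)) x, x⟫_ℂ := by
    rw [← inner_conj_symm, ContinuousLinearMap.adjoint_inner_left, inner_conj_symm,
      pow_succ', ContinuousLinearMap.mul_apply]
  rw [hib, norm_mul] at hb
  refine hb.trans ?_
  have h6 : ‖(T ^ m) x‖ ≤ ‖T ^ m‖ := by
    calc ‖(T ^ m) x‖ ≤ ‖T ^ m‖ * ‖x‖ := (T ^ m).le_opNorm x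
      _ = ‖T ^ m‖ := by rw [hx, mul_one]
  have h7 : ‖ContinuousLinearMap.adjoint T x‖ ≤ ‖T‖ := by
    calc ‖ContinuousLinearMap.adjoint T x‖ ≤ ‖ContinuousLinearMap.adjoint T‖ * ‖x‖ :=
          (ContinuousLinearMap.adjoint T).le_opNorm x
      _ = ‖T‖ := by
          rw [hx, mul_one]
          exact LinearIsometryEquiv.norm_map ContinuousLinearMap.adjoint T
  have h8 : ‖(T ^ m) x‖ * ‖ContinuousLinearMap.adjoint T x‖ ≤ ‖T ^ m‖ * ‖T‖ :=
    mul_le_mul h6 h7 (norm_nonneg _) (norm_nonneg _)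
  linarith

lemma pointwise (T : H →L[ℂ] H) {x : H} (hx : ‖x‖ = 1) :
    ∀ n : ℕ, 1 ≤ n → ‖⟪T x, x⟫_ℂ‖ ^ n ≤
      (1 / 2 ^ (n - 1)) * ‖⟪(T ^ n) x, x⟫_ℂ‖ +
        ∑ k ∈ Finset.Icc 1 (n - 1), (1 / 2 ^ k) * ‖T ^ k‖ * ‖T‖ ^ (n - k) := by
  intro n hn
  induction n, hn using Nat.le_induction with
  | base => simp
  | succ n hn ih =>
    have ha1 : ‖⟪T x, x⟫_ℂ‖ ≤ ‖T‖ := by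
      calc ‖⟪T x, x⟫_ℂ‖ ≤ ‖T x‖ * ‖x‖ := norm_inner_le_norm _ _
        _ ≤ ‖T‖ * ‖x‖ * ‖x‖ := by gcongr; exact T.le_opNorm x
        _ = ‖T‖ := by rw [hx]; ring
    have hstep := step T n hx
    have hTnorm : (0:ℝ) ≤ ‖T‖ := norm_nonneg _
    have ha1n : (0:ℝ) ≤ ‖⟪T x, x⟫_ℂ‖ := norm_nonneg _
    -- abbreviations
    set a1 := ‖⟪T x, x⟫_ℂ‖ with ha1d
    set an := ‖⟪(T ^ n) x, x⟫_ℂ‖ with hand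
    set an1 := ‖⟪(T ^ (n + 1)) x, x⟫_ℂ‖ with han1d
    set S := ∑ k ∈ Finset.Icc 1 (n - 1), (1 / 2 ^ k) * ‖T ^ k‖ * ‖T‖ ^ (n - k) with hSd
    have hS_nonneg : 0 ≤ S := by
      apply Finset.sum_nonneg
      intro k hk
      positivity
    have h1 : a1 ^ (n + 1) = a1 ^ n * a1 := by ring
    have h2 : a1 ^ n * a1 ≤ ((1 / 2 ^ (n - 1)) * an + S) * a1 := by
      apply mul_le_mul_of_nonneg_right (ih) ha1n
    have h3 : ((1 / 2 ^ (n - 1)) * an + S) * a1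
        = (1 / 2 ^ (n - 1)) * (an * a1) + S * a1 := by ring
    have h4 : (1 / 2 ^ (n - 1) : ℝ) * (an * a1) ≤
        (1 / 2 ^ (n - 1)) * ((‖T ^ n‖ * ‖T‖ + an1) / 2) := by
      apply mul_le_mul_of_nonneg_left hstep
      positivity
    have h5 : S * a1 ≤ S * ‖T‖ := mul_le_mul_of_nonneg_left ha1 hS_nonneg
    have hpow : (1 / 2 ^ (n - 1) : ℝ) * (1 / 2) = 1 / 2 ^ n := by
      rw [div_mul_div_comm, one_mul, ← pow_succ]
      congr 2
      omega
    have hST : S * ‖T‖ = ∑ k ∈ Finset.Icc 1 (n - 1),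
        (1 / 2 ^ k) * ‖T ^ k‖ * ‖T‖ ^ (n + 1 - k) := by
      rw [hSd, Finset.sum_mul]
      apply Finset.sum_congr rfl
      intro k hk
      simp only [Finset.mem_Icc] at hk
      have : n + 1 - k = (n - k) + 1 := by omega
      rw [this, pow_succ]
      ring
    have hsum : ∑ k ∈ Finset.Icc 1 ((n + 1) - 1), (1 / 2 ^ k) * ‖T ^ k‖ * ‖T‖ ^ (n + 1 - k)
        = (∑ k ∈ Finset.Icc 1 (n - 1), (1 / 2 ^ k) * ‖T ^ k‖ * ‖T‖ ^ (n + 1 - k))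
          + (1 / 2 ^ n) * ‖T ^ n‖ * ‖T‖ := by
      have hn1 : (n + 1) - 1 = n := by omega
      rw [hn1]
      have hsplit : Finset.Icc 1 n = insert n (Finset.Icc 1 (n - 1)) := by
        ext k
        simp only [Finset.mem_Icc, Finset.mem_insert]
        omega
      rw [hsplit, Finset.sum_insert (by simp only [Finset.mem_Icc]; omega)]
      have : n + 1 - n = 1 := by omega
      rw [this, pow_one]
      ring
    calc a1 ^ (n + 1) = a1 ^ n * a1 := h1
      _ ≤ ((1 / 2 ^ (n - 1)) * an + S) * a1 := h2
      _ = (1 / 2 ^ (n - 1)) * (an * a1) + S * a1 := h3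
      _ ≤ (1 / 2 ^ (n - 1)) * ((‖T ^ n‖ * ‖T‖ + an1) / 2) + S * ‖T‖ := by
          apply add_le_add h4 h5
      _ = (1 / 2 ^ n) * an1 + ((1 / 2 ^ n) * ‖T ^ n‖ * ‖T‖ + S * ‖T‖) := by
          rw [← hpow]; ring
      _ = (1 / 2 ^ ((n + 1) - 1)) * an1 +
          ∑ k ∈ Finset.Icc 1 ((n + 1) - 1), (1 / 2 ^ k) * ‖T ^ k‖ * ‖T‖ ^ (n + 1 - k) := by
          rw [hsum, hST]
          have : (n + 1) - 1 = n := by omega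
          rw [this]
          ring

theorem cor5 (T : H →L[ℂ] H) (n : ℕ) (hn : 2 ≤ n) :
    (numRadius T) ^ n ≤ (1 / 2 ^ (n - 1)) * numRadius (T ^ n) +
      ∑ k ∈ Finset.Icc 1 (n - 1), (1 / 2 ^ k) * ‖T ^ k‖ * ‖T‖ ^ (n - k) := by
  set C := (1 / 2 ^ (n - 1)) * numRadius (T ^ n) +
      ∑ k ∈ Finset.Icc 1 (n - 1), (1 / 2 ^ k) * ‖T ^ k‖ * ‖T‖ ^ (n - k) with hC
  have hC_nonneg : 0 ≤ C := by
    apply add_nonneg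
    · exact mul_nonneg (by positivity) (numRadius_nonneg (T ^ n))
    · apply Finset.sum_nonneg
      intro k hk
      positivity
  have hn1 : 1 ≤ n := le_trans (by norm_num) hn
  have hne : n ≠ 0 := by omega
  -- pointwise bound
  have key : ∀ x : H, ‖x‖ = 1 → ‖⟪T x, x⟫_ℂ‖ ^ n ≤ C := by
    intro x hx
    refine (pointwise T hx n hn1).trans ?_
    rw [hC]
    gcongr
    exact le_numRadius (T ^ n) hx
  -- conclude via n-th roots
  have hroot : numRadius T ≤ C ^ ((n : ℝ)⁻¹) := by
    apply Real.sSup_le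
    · rintro r ⟨x, hx, rfl⟩
      have h1 : ‖⟪T x, x⟫_ℂ‖ ^ n ≤ (C ^ ((n : ℝ)⁻¹)) ^ n := by
        rw [Real.rpow_inv_natCast_pow hC_nonneg hne]
        exact key x hx
      exact le_of_pow_le_pow_left₀ hne (Real.rpow_nonneg hC_nonneg _) h1
    · exact Real.rpow_nonneg hC_nonneg _
  calc (numRadius T) ^ n ≤ (C ^ ((n : ℝ)⁻¹)) ^ n :=
        pow_le_pow_left₀ (numRadius_nonneg T) hroot n
    _ = C := Real.rpow_inv_natCast_pow hC_nonneg hne
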